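/- For every integer l ≥ 2 and real x ≥ 3, the sum over primes p with x/2 < p^l ≤ x - 1.5 of 1/(x - p^l) is at most (2/l)·∫ from √(x/2) to √(x-1.5)-1 of dy/(x - y²) + 16/15. -/

import Mathlib

open Real Finset

set_option maxHeartbeats 1000000

lemma sum_intervals_le (h : ℝ → ℝ) (c : ℝ) (u v : ℕ → ℝ) (T : Finset ℕ) :
    ∀ (d : ℝ), c ≤ d → ContinuousOn h (Set.Icc c d) →
    (∀ y ∈ Set.Icc c d, 0 ≤ h y) →
    (∀ p ∈ T, u p ≤ v p) → (∀ p ∈ T, c ≤ u p) → (∀ p ∈ T, v p ≤ d) →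
    (∀ p ∈ T, ∀ q ∈ T, p < q → v p ≤ u q) →
    ∑ p ∈ T, (∫ y in u p..v p, h y) ≤ ∫ y in c..d, h y := by
  induction T using Finset.induction_on_max with
  | empty =>
    intro d hcd hcont hpos _ _ _ _
    simp only [Finset.sum_empty]
    exact intervalIntegral.integral_nonneg hcd hpos
  | insert a s ha ih =>
    intro d hcd hcont hpos huv hcu hvd hsep
    have hane : a ∉ s := fun hs => lt_irrefl a (ha a hs)
    have haT : a ∈ insert a s := Finset.mem_insert_self a s
    have hua : c ≤ u a := hcu a haT
    have hva : v a ≤ d := hvd a haT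
    have huva : u a ≤ v a := huv a haT
    have hint : ∀ a' b' : ℝ, c ≤ a' → a' ≤ b' → b' ≤ d → IntervalIntegrable h MeasureTheory.volume a' b' := by
      intro a' b' h1 hab h2
      apply ContinuousOn.intervalIntegrable
      apply hcont.mono
      rw [Set.uIcc_of_le hab]
      exact Set.Icc_subset_Icc h1 h2
    rw [Finset.sum_insert hane]
    have hs' : ∑ p ∈ s, (∫ y in u p..v p, h y) ≤ ∫ y in c..u a, h y := by
      apply ih (u a) hua (hcont.mono (Set.Icc_subset_Icc le_rfl (huva.trans hva)))
        (fun y hy => hpos y (Set.Icc_subset_Icc le_rfl (huva.trans hva) hy))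
        (fun p hp => huv p (Finset.mem_insert_of_mem hp))
        (fun p hp => hcu p (Finset.mem_insert_of_mem hp))
        (fun p hp => hsep p (Finset.mem_insert_of_mem hp) a haT (ha p hp))
        (fun p hp q hq hpq => hsep p (Finset.mem_insert_of_mem hp) q (Finset.mem_insert_of_mem hq) hpq)
    have e1 : (∫ y in c..u a, h y) + (∫ y in u a..v a, h y) = ∫ y in c..v a, h y :=
      intervalIntegral.integral_add_adjacent_intervals (hint c (u a) le_rfl hua (huva.trans hva))
        (hint (u a) (v a) hua huva hva)
    have e2 : (∫ y in c..v a, h y) + (∫ y in v a..d, h y) = ∫ y in c..d, h y :=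
      intervalIntegral.integral_add_adjacent_intervals (hint c (v a) le_rfl (hua.trans huva) hva)
        (hint (v a) d (hua.trans huva) hva le_rfl)
    have e3 : 0 ≤ ∫ y in v a..d, h y :=
      intervalIntegral.integral_nonneg hva
        (fun y hy => hpos y ⟨le_trans (hua.trans huva) hy.1, hy.2⟩)
    linarith

lemma sqrt_pow_eq_rpow {t : ℝ} (ht : 0 ≤ t) (l : ℕ) :
    Real.sqrt (t ^ l) = t ^ ((l : ℝ) / 2) := by
  rw [Real.sqrt_eq_rpow, ← Real.rpow_natCast t l, ← Real.rpow_mul ht]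
  congr 1
  ring

lemma rpow_succ_ge (l : ℕ) (hl : 2 ≤ l) {n : ℕ} (hn : 1 ≤ n) :
    Real.sqrt ((n : ℝ) ^ l) + (l : ℝ) / 2 ≤ Real.sqrt (((n : ℝ) + 1) ^ l) := by
  have hn0 : (0:ℝ) < n := by exact_mod_cast Nat.lt_of_lt_of_le Nat.zero_lt_one hn
  have hn1 : (1:ℝ) ≤ n := by exact_mod_cast hn
  set r : ℝ := (l : ℝ) / 2 with hr_def
  have hr : 1 ≤ r := by
    rw [hr_def]
    have : (2:ℝ) ≤ l := by exact_mod_cast hl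
    linarith
  rw [sqrt_pow_eq_rpow hn0.le, sqrt_pow_eq_rpow (by linarith)]
  have hsplit : ((n : ℝ) + 1) ^ r = (n : ℝ) ^ r * (1 + 1 / n) ^ r := by
    rw [← Real.mul_rpow hn0.le (by positivity)]
    congr 1
    field_simp
  have hbern : 1 + r * (1 / n) ≤ (1 + 1 / n) ^ r :=
    one_add_mul_self_le_rpow_one_add (neg_one_lt_zero.le.trans (by positivity)) hr
  have hnr1 : (1:ℝ) ≤ (n:ℝ) ^ (r - 1) :=
    Real.one_le_rpow hn1 (by linarith)
  have hkey : (n:ℝ) ^ r * (1 / n) = (n:ℝ) ^ (r - 1) := by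
    rw [Real.rpow_sub hn0, Real.rpow_one]
    ring
  have hnrpos : (0:ℝ) < (n:ℝ) ^ r := Real.rpow_pos_of_pos hn0 r
  calc (n:ℝ) ^ r + r ≤ (n:ℝ) ^ r + r * (n:ℝ) ^ (r-1) := by nlinarith
    _ = (n:ℝ) ^ r * (1 + r * (1/n)) := by rw [mul_add, mul_one, mul_comm r, ← mul_assoc, ← hkey]; ring
    _ ≤ (n:ℝ) ^ r * (1 + 1/n) ^ r := by nlinarith
    _ = ((n : ℝ) + 1) ^ r := hsplit.symm

theorem sum_primePowers_le_integral (l : ℕ) (hl : 2 ≤ l) (x : ℝ) (hx : 3 ≤ x) :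
    ∑ p ∈ (Finset.Icc 1 ⌊x⌋₊).filter
        (fun p => Nat.Prime p ∧ x / 2 < (p : ℝ) ^ l ∧ (p : ℝ) ^ l ≤ x - 1.5),
      (1 : ℝ) / (x - (p : ℝ) ^ l) ≤
    (2 / l) * (∫ y in Real.sqrt (x / 2)..(Real.sqrt (x - 1.5) - 1), 1 / (x - y ^ 2))
      + 16 / 15 := by
  have hx15 : (1.5:ℝ) ≤ x - 1.5 := by norm_num; linarith
  have hx2' : x / 2 ≤ x - 1.5 := by norm_num; linarith
  set c := Real.sqrt (x / 2) with hc_def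
  set d := Real.sqrt (x - 1.5) - 1 with hd_def
  set S := (Finset.Icc 1 ⌊x⌋₊).filter
      (fun p => Nat.Prime p ∧ x / 2 < (p : ℝ) ^ l ∧ (p : ℝ) ^ l ≤ x - 1.5) with hS_def
  set h : ℝ → ℝ := fun y => 1 / (x - y ^ 2) with hh_def
  have hc0 : 0 ≤ c := Real.sqrt_nonneg _
  have hcs : c ≤ Real.sqrt (x - 1.5) := Real.sqrt_le_sqrt hx2'
  have hs1 : (1:ℝ) < Real.sqrt (x - 1.5) := by
    rw [show (1:ℝ) = Real.sqrt 1 by simp]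
    exact Real.sqrt_lt_sqrt (by norm_num) (by linarith)
  have hd0 : 0 < d := by rw [hd_def]; linarith
  have hden : ∀ y : ℝ, 0 ≤ y → y ≤ Real.sqrt (x - 1.5) → 1.5 ≤ x - y ^ 2 := by
    intro y hy0 hy
    nlinarith [Real.sq_sqrt (show (0:ℝ) ≤ x - 1.5 by linarith), Real.sqrt_nonneg (x - 1.5)]
  have hden2 : ∀ y : ℝ, 0 ≤ y → y ≤ c → x / 2 ≤ x - y ^ 2 := by
    intro y hy0 hy
    nlinarith [Real.sq_sqrt (show (0:ℝ) ≤ x / 2 by linarith), Real.sqrt_nonneg (x / 2)]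
  have hcont : ∀ a b : ℝ, 0 ≤ a → b ≤ Real.sqrt (x - 1.5) →
      ContinuousOn h (Set.Icc a b) := by
    intro a b ha hb
    apply ContinuousOn.div continuousOn_const
      ((continuous_const.sub (continuous_pow 2)).continuousOn)
    intro y hy
    have := hden y (ha.trans hy.1) (hy.2.trans hb)
    intro hzero
    simp only [Pi.sub_apply] at hzero; rw [hzero] at this; norm_num at this
  have hpos : ∀ a b : ℝ, 0 ≤ a → b ≤ Real.sqrt (x - 1.5) →
      ∀ y ∈ Set.Icc a b, 0 ≤ h y := by
    intro a b ha hb y hy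
    have := hden y (ha.trans hy.1) (hy.2.trans hb)
    rw [hh_def]
    positivity
  have hint : ∀ a b : ℝ, 0 ≤ a → a ≤ b → b ≤ Real.sqrt (x - 1.5) →
      IntervalIntegrable h MeasureTheory.volume a b := by
    intro a b ha hab hb
    apply ContinuousOn.intervalIntegrable
    rw [Set.uIcc_of_le hab]
    exact hcont a b ha hb
  have hl0 : (0:ℝ) < l := by positivity
  have hlR : (2:ℝ) ≤ l := by exact_mod_cast hl
  have h2l : 2 / (l:ℝ) ≤ 1 := by rw [div_le_one hl0]; linarith
  have h2l0 : 0 ≤ 2 / (l:ℝ) := by positivity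
  have hds : d ≤ Real.sqrt (x - 1.5) := by rw [hd_def]; linarith
  -- lower bound on the integral term
  have hIlow : -(2/x) ≤ (2/(l:ℝ)) * ∫ y in c..d, h y := by
    have h2x0 : (0:ℝ) ≤ 2 / x := by positivity
    rcases le_or_gt c d with hcd | hdc
    · have h0 : 0 ≤ ∫ y in c..d, h y :=
        intervalIntegral.integral_nonneg hcd (hpos c d hc0 hds)
      nlinarith
    · have hb : ∀ y ∈ Set.Icc d c, h y ≤ 2 / x := by
        intro y hy
        have hy0 : 0 ≤ y := le_trans hd0.le hy.1
        have := hden2 y hy0 hy.2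
        have hx2pos : (0:ℝ) < x / 2 := by linarith
        rw [hh_def]
        calc 1 / (x - y ^ 2) ≤ 1 / (x / 2) := by
              apply one_div_le_one_div_of_le hx2pos this
          _ = 2 / x := by rw [one_div_div]
      have hIc : ∫ y in d..c, h y ≤ (c - d) * (2 / x) := by
        calc ∫ y in d..c, h y ≤ ∫ _y in d..c, (2/x) :=
              intervalIntegral.integral_mono_on hdc.le
                (hint d c hd0.le hdc.le hcs) intervalIntegrable_const hb
          _ = (c - d) * (2/x) := by rw [intervalIntegral.integral_const, smul_eq_mul]
      have hcd1 : c - d ≤ 1 := by rw [hd_def]; linarith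
      have hsymm : ∫ y in c..d, h y = -∫ y in d..c, h y :=
        intervalIntegral.integral_symm d c
      rw [hsymm]
      have h1 : ∫ y in d..c, h y ≤ 2/x := by nlinarith
      nlinarith
  have h2x3 : (2:ℝ)/x ≤ 2/3 := by
    rw [div_le_div_iff₀ (by linarith) (by norm_num)]; linarith
  have hmem : ∀ p ∈ S, Nat.Prime p ∧ x / 2 < (p : ℝ) ^ l ∧ (p : ℝ) ^ l ≤ x - 1.5 :=
    fun p hp => (Finset.mem_filter.mp hp).2
  rcases S.eq_empty_or_nonempty with hSe | hS
  · rw [hSe, Finset.sum_empty]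
    linarith
  set g : ℕ → ℝ := fun n => Real.sqrt ((n:ℝ) ^ l) with hg_def
  set m := S.max' hS with hm_def
  have hmS : m ∈ S := S.max'_mem hS
  obtain ⟨hmp, hm1, hm2⟩ := hmem m hmS
  have htermm : 1 / (x - (m:ℝ) ^ l) ≤ 2/3 := by
    have h1 : (1.5:ℝ) ≤ x - (m:ℝ)^l := by linarith
    calc 1 / (x - (m:ℝ)^l) ≤ 1 / 1.5 := one_div_le_one_div_of_le (by norm_num) h1
      _ = 2/3 := by norm_num
  have hsplit : ∑ p ∈ S, (1:ℝ) / (x - (p:ℝ)^l) =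
      1 / (x - (m:ℝ)^l) + ∑ p ∈ S.erase m, (1:ℝ) / (x - (p:ℝ)^l) :=
    (Finset.add_sum_erase S _ hmS).symm
  rcases (S.erase m).eq_empty_or_nonempty with hE | hE
  · -- S = {m}
    have hm2nat : 2 ≤ m := hmp.two_le
    have hx55 : (5.5:ℝ) ≤ x := by
      have h4 : (4:ℝ) ≤ (m:ℝ)^l := by
        calc (4:ℝ) = 2^2 := by norm_num
          _ ≤ (2:ℝ)^l := pow_le_pow_right₀ (by norm_num) hl
          _ ≤ (m:ℝ)^l := pow_le_pow_left₀ (by norm_num) (by exact_mod_cast hm2nat) l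
      linarith
    have h2x5 : (2:ℝ)/x ≤ 2/5.5 := by
      rw [div_le_div_iff₀ (by linarith) (by norm_num)]; linarith
    rw [hsplit, hE, Finset.sum_empty]
    linarith
  · -- erase nonempty
    have herase : ∀ p ∈ S.erase m, p ∈ S ∧ p < m := fun p hp =>
      ⟨Finset.mem_of_mem_erase hp,
        lt_of_le_of_ne (S.le_max' p (Finset.mem_of_mem_erase hp)) (Finset.ne_of_mem_erase hp)⟩
    have hgap : ∀ p ∈ S.erase m, p + 2 ≤ m := by
      intro p hp
      obtain ⟨hpS, hpm⟩ := herase p hp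
      obtain ⟨hpp, hp1, hp2⟩ := hmem p hpS
      by_contra hcon
      push_neg at hcon
      have hmeq : m = p + 1 := by omega
      have hp2' : p = 2 := by
        rcases hpp.eq_two_or_odd' with h2 | hodd
        · exact h2
        · exfalso
          have heven : Even m := by rw [hmeq]; exact Odd.add_one hodd
          have := (Nat.Prime.even_iff hmp).mp heven
          have := hpp.two_le
          omega
      have hm3 : m = 3 := by omega
      rw [hp2'] at hp1
      rw [hm3] at hm2
      have h32 : 2 * (2:ℝ)^l ≤ (3:ℝ)^l := by
        have h1 : (3:ℝ)^l = (2:ℝ)^l * (1.5:ℝ)^l := by rw [← mul_pow]; norm_num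
        have h2 : (2:ℝ) ≤ (1.5:ℝ)^l := by
          calc (2:ℝ) ≤ 1.5^2 := by norm_num
            _ ≤ (1.5:ℝ)^l := pow_le_pow_right₀ (by norm_num) hl
        nlinarith [pow_pos (show (0:ℝ) < 2 by norm_num) l]
      push_cast at hp1 hm2
      linarith
    -- facts for each p in the erased set
    have hkeyfacts : ∀ p ∈ S.erase m, c < g p ∧ g p + (l:ℝ)/2 ≤ g (p+1) ∧ g (p+1) ≤ d := by
      intro p hp
      obtain ⟨hpS, hpm⟩ := herase p hp
      obtain ⟨hpp, hp1, hp2⟩ := hmem p hpS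
      have hgap2 := hgap p hp
      have hp2le : 2 ≤ p := hpp.two_le
      refine ⟨?_, ?_, ?_⟩
      · rw [hg_def]
        exact Real.sqrt_lt_sqrt (by linarith) hp1
      · have := rpow_succ_ge l hl (show 1 ≤ p by omega)
        rw [hg_def]
        simpa [Nat.cast_add, Nat.cast_one] using this
      · -- g (p+1) ≤ g (m-1) ≤ g m - 1 ≤ √(x-1.5) - 1 = d
        have hstep1 : g (p+1) ≤ g (m-1) := by
          rw [hg_def]
          apply Real.sqrt_le_sqrt
          apply pow_le_pow_left₀ (by positivity)
          exact_mod_cast (by omega : p + 1 ≤ m - 1)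
        have hm1ge : 1 ≤ m - 1 := by omega
        have hstep2 : g (m-1) + (l:ℝ)/2 ≤ g ((m-1)+1) := by
          have := rpow_succ_ge l hl hm1ge
          rw [hg_def]
          simpa [Nat.cast_add, Nat.cast_one] using this
        have hmm : (m-1) + 1 = m := by omega
        rw [hmm] at hstep2
        have hgm : g m ≤ Real.sqrt (x - 1.5) := by
          rw [hg_def]
          exact Real.sqrt_le_sqrt hm2
        rw [hd_def]
        have hl2 : (1:ℝ) ≤ (l:ℝ)/2 := by linarith
        linarith
    have hpb : ∀ p ∈ S.erase m,
        (1:ℝ) / (x - (p:ℝ)^l) ≤ (2/(l:ℝ)) * ∫ y in g p..g (p+1), h y := by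
      intro p hp
      obtain ⟨hpS, hpm⟩ := herase p hp
      obtain ⟨hpp, hp1, hp2⟩ := hmem p hpS
      obtain ⟨hcgp, hgl, hgd⟩ := hkeyfacts p hp
      have hgp0 : 0 ≤ g p := by rw [hg_def]; exact Real.sqrt_nonneg _
      have hglt : g p ≤ g (p+1) := by linarith
      have hgs : g (p+1) ≤ Real.sqrt (x - 1.5) := hgd.trans hds
      have htp : (0:ℝ) < 1 / (x - (p:ℝ)^l) := by
        have : (1.5:ℝ) ≤ x - (p:ℝ)^l := by linarith
        positivity
      have hptwise : ∀ y ∈ Set.Icc (g p) (g (p+1)), 1 / (x - (p:ℝ)^l) ≤ h y := by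
        intro y hy
        have hy0 : 0 ≤ y := le_trans hgp0 hy.1
        have hyup := hden y hy0 (hy.2.trans hgs)
        have hsq : (p:ℝ)^l ≤ y^2 := by
          have h1 : (g p)^2 = (p:ℝ)^l := by
            rw [hg_def]; exact Real.sq_sqrt (by positivity)
          nlinarith [hy.1]
        rw [hh_def]
        exact one_div_le_one_div_of_le (by linarith) (by linarith)
      have hIlower : ((l:ℝ)/2) * (1 / (x - (p:ℝ)^l)) ≤ ∫ y in g p..g (p+1), h y := by
        calc ((l:ℝ)/2) * (1 / (x - (p:ℝ)^l))
            ≤ (g (p+1) - g p) * (1 / (x - (p:ℝ)^l)) := by nlinarith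
          _ = ∫ _y in g p..g (p+1), (1 / (x - (p:ℝ)^l)) := by
              rw [intervalIntegral.integral_const, smul_eq_mul]
          _ ≤ ∫ y in g p..g (p+1), h y := by
              apply intervalIntegral.integral_mono_on hglt intervalIntegrable_const
                (hint (g p) (g (p+1)) hgp0 hglt hgs) hptwise
      have hfin : (2/(l:ℝ)) * (((l:ℝ)/2) * (1 / (x - (p:ℝ)^l))) = 1 / (x - (p:ℝ)^l) := by
        have hlne : (l:ℝ) ≠ 0 := ne_of_gt hl0
        have h1 : (2/(l:ℝ)) * ((l:ℝ)/2) = 1 := by field_simp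
        rw [← mul_assoc, h1, one_mul]
      calc (1:ℝ) / (x - (p:ℝ)^l) = (2/(l:ℝ)) * (((l:ℝ)/2) * (1 / (x - (p:ℝ)^l))) := hfin.symm
        _ ≤ (2/(l:ℝ)) * ∫ y in g p..g (p+1), h y :=
            mul_le_mul_of_nonneg_left hIlower h2l0
    obtain ⟨q, hq⟩ := hE
    have hcd : c ≤ d := by
      obtain ⟨hcq, hql, hqd⟩ := hkeyfacts q hq
      have : (1:ℝ) ≤ (l:ℝ)/2 := by linarith
      linarith
    have hsum2 : ∑ p ∈ S.erase m, (1:ℝ) / (x - (p:ℝ)^l) ≤ (2/(l:ℝ)) * ∫ y in c..d, h y := by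
      calc ∑ p ∈ S.erase m, (1:ℝ) / (x - (p:ℝ)^l)
          ≤ ∑ p ∈ S.erase m, (2/(l:ℝ)) * ∫ y in g p..g (p+1), h y :=
            Finset.sum_le_sum hpb
        _ = (2/(l:ℝ)) * ∑ p ∈ S.erase m, ∫ y in g p..g (p+1), h y := by
            rw [Finset.mul_sum]
        _ ≤ (2/(l:ℝ)) * ∫ y in c..d, h y := by
            apply mul_le_mul_of_nonneg_left _ h2l0
            apply sum_intervals_le h c g (fun p => g (p+1)) (S.erase m) d hcd
              (hcont c d hc0 hds) (hpos c d hc0 hds)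
            · intro p hp
              obtain ⟨_, h2, _⟩ := hkeyfacts p hp
              linarith
            · intro p hp
              obtain ⟨h1, _, _⟩ := hkeyfacts p hp
              linarith
            · intro p hp
              obtain ⟨_, _, h3⟩ := hkeyfacts p hp
              exact h3
            · intro p hp q' hq' hpq'
              have hmono : g (p+1) ≤ g q' := by
                rw [hg_def]
                apply Real.sqrt_le_sqrt
                apply pow_le_pow_left₀ (by positivity)
                exact_mod_cast (by omega : p + 1 ≤ q')
              exact hmono
    rw [hsplit]
    linarith
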